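/- Let Σ be an n×n nonnegative matrix measure on ℝ, ρ a finite Borel measure equivalent to Σ, and Ψ a Borel measurable density of Σ with respect to ρ with Ψ(t) positive semidefinite for all t. Let m ≥ 1 satisfy ρ{ t : rank Ψ(t) > m } = 0, and let e₁, …, e_m ∈ ℂⁿ be orthonormal vectors. For k ≤ m let Ψ_k(t) := (⟪Ψ(t) e_j, e_i⟫)_{1 ≤ i,j ≤ k} be the compressed k×k density. Then the following are equivalent: (i) for every k ≤ m and every i ≤ k, the set { t : rank Ψ_k(t) ≥ i } coincides with { t : rank Ψ(t) ≥ i } up to a ρ-null set (i.e. span{e₁,…,e_k} is a k-th Hellinger subspace for every k ≤ m); (ii) for every k ≤ m, the set { t : det Ψ_k(t) ≠ 0 } coincides with { t : rank Ψ(t) ≥ k } up to a ρ-null set. -/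

import Mathlib

open MeasureTheory Matrix
open scoped ComplexOrder ComplexInnerProductSpace

/-- The compressed matrix as a product. -/
lemma compress_eq_mul {n k : ℕ} (Ψ : Matrix (Fin n) (Fin n) ℂ)
    (f : Fin k → EuclideanSpace ℂ (Fin n)) :
    (Matrix.of fun p q : Fin k =>
        ⟪Matrix.toEuclideanLin Ψ (f q), f p⟫) =
      (Matrix.of fun p x => f p x) * Ψ.map star * (Matrix.of fun p x => f p x)ᴴ := by
  ext p q
  simp only [Matrix.of_apply, Matrix.mul_apply, Matrix.conjTranspose_apply,
    Matrix.map_apply, Matrix.toEuclideanLin_apply, PiLp.inner_apply,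
    PiLp.toLp_apply, Matrix.mulVec, dotProduct,
    RCLike.inner_apply, map_sum, Finset.sum_mul, Finset.mul_sum]
  rw [Finset.sum_comm]
  refine Finset.sum_congr rfl fun j _ => Finset.sum_congr rfl fun i _ => ?_
  simp only [_root_.map_mul, Complex.star_def]
  ring

lemma rank_compress_le {n k : ℕ} (Ψ : Matrix (Fin n) (Fin n) ℂ)
    (f : Fin k → EuclideanSpace ℂ (Fin n)) :
    (Matrix.of fun p q : Fin k =>
        ⟪Matrix.toEuclideanLin Ψ (f q), f p⟫).rank ≤ Ψ.rank := by
  rw [compress_eq_mul]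
  have h1 : Ψ.map star = (Ψᴴ)ᵀ := by ext i j; rfl
  calc ((Matrix.of fun p x => f p x) * Ψ.map star * (Matrix.of fun p x => f p x)ᴴ).rank
      ≤ ((Matrix.of fun p x => f p x) * Ψ.map star).rank := Matrix.rank_mul_le_left _ _
    _ ≤ (Ψ.map star).rank := Matrix.rank_mul_le_right _ _
    _ = Ψ.rank := by rw [h1, Matrix.rank_transpose, Matrix.rank_conjTranspose]

lemma rank_castLE_submatrix_le {i k : ℕ} (h : i ≤ k) (X : Matrix (Fin k) (Fin k) ℂ) :
    (X.submatrix (Fin.castLE h) (Fin.castLE h)).rank ≤ X.rank := by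
  set C : Matrix (Fin i) (Fin k) ℂ :=
    (1 : Matrix (Fin k) (Fin k) ℂ).submatrix (Fin.castLE h) id with hC
  have h1 : C * X = X.submatrix (Fin.castLE h) id := by
    rw [hC]
    have := Matrix.one_submatrix_mul (Fin.castLE h) (Equiv.refl (Fin k)) X
    simpa using this
  have h2 : X.submatrix (Fin.castLE h) id * Cᴴ
      = X.submatrix (Fin.castLE h) (Fin.castLE h) := by
    rw [hC, Matrix.conjTranspose_submatrix, Matrix.conjTranspose_one]
    have := Matrix.mul_submatrix_one (Equiv.refl (Fin k)) (Fin.castLE h)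
      (X.submatrix (Fin.castLE h) id)
    simpa using this
  calc (X.submatrix (Fin.castLE h) (Fin.castLE h)).rank
      = (C * X * Cᴴ).rank := by rw [h1, h2]
    _ ≤ (C * X).rank := Matrix.rank_mul_le_left _ _
    _ ≤ X.rank := Matrix.rank_mul_le_right _ _

lemma det_ne_zero_iff_le_rank {k : ℕ} (N : Matrix (Fin k) (Fin k) ℂ) :
    N.det ≠ 0 ↔ k ≤ N.rank := by
  constructor
  · intro h
    have : IsUnit N := N.isUnit_iff_isUnit_det.mpr h.isUnit
    rw [Matrix.rank_of_isUnit N this, Fintype.card_fin]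
  · intro h hdet
    obtain ⟨v, hv, hv0⟩ := (Matrix.exists_mulVec_eq_zero_iff).mpr hdet
    have hker : v ∈ LinearMap.ker N.mulVecLin := by
      simpa [Matrix.mulVecLin_apply] using hv0
    have hpos : 0 < Module.finrank ℂ (LinearMap.ker N.mulVecLin) := by
      rw [Module.finrank_pos_iff]
      exact ⟨⟨⟨v, hker⟩, 0, by simp [hv]⟩⟩
    have := LinearMap.finrank_range_add_finrank_ker N.mulVecLin
    rw [Module.finrank_fintype_fun_eq_card, Fintype.card_fin] at this
    have : N.rank + 1 ≤ k := by
      rw [Matrix.rank]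
      omega
    omega

lemma compress_nest {n m i k : ℕ} (h : i ≤ k) (hk : k ≤ m) (him : i ≤ m)
    (Ψ : Matrix (Fin n) (Fin n) ℂ) (e : Fin m → EuclideanSpace ℂ (Fin n)) :
    (Matrix.of fun p q : Fin i =>
        ⟪Matrix.toEuclideanLin Ψ (e (Fin.castLE him q)), e (Fin.castLE him p)⟫) =
      (Matrix.of fun p q : Fin k =>
        ⟪Matrix.toEuclideanLin Ψ (e (Fin.castLE hk q)), e (Fin.castLE hk p)⟫).submatrix
        (Fin.castLE h) (Fin.castLE h) := by
  ext p q
  simp [Matrix.submatrix_apply, Fin.castLE_castLE]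

/-- **The determinant criterion (4) for Hellinger chains, finite-dimensional case.**
Let `S` be an `n × n` nonnegative matrix measure on `ℝ`, `ρ ∼ S` a finite Borel
measure, `Ψ` a positive semidefinite Borel density `dS/dρ`, and `m ≥ 1` with
`rank Ψ(t) ≤ m` `ρ`-a.e.  For orthonormal `e₁, …, e_m` and `k ≤ m` let
`Ψ_k(t) = (⟪Ψ(t) eⱼ, eᵢ⟫)_{i,j ≤ k}` be the compressed density.  Then
`span {e₁, …, e_k}` is a `k`-th Hellinger subspace for every `k ≤ m`
(i.e. `{t : rank Ψ_k(t) ≥ i} = {t : rank Ψ(t) ≥ i}` mod `ρ` for all `i ≤ k ≤ m`)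
if and only if `{t : det Ψ_k(t) ≠ 0} = {t : rank Ψ(t) ≥ k}` mod `ρ` for all `k ≤ m`. -/
theorem stmt_8 (n m : ℕ) (hm : 1 ≤ m)
    (S : VectorMeasure ℝ (Matrix (Fin n) (Fin n) ℂ))
    (hpos : ∀ δ : Set ℝ, MeasurableSet δ → (S δ).PosSemidef)
    (ρ : Measure ℝ) [IsFiniteMeasure ρ]
    (hequiv : ∀ δ : Set ℝ, MeasurableSet δ → (ρ δ = 0 ↔ S δ = 0))
    (Ψ : ℝ → Matrix (Fin n) (Fin n) ℂ)
    (hΨmeas : ∀ i j, Measurable fun t => Ψ t i j)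
    (hΨpos : ∀ t, (Ψ t).PosSemidef)
    (hdens : ∀ δ : Set ℝ, MeasurableSet δ → ∀ i j, S δ i j = ∫ t in δ, Ψ t i j ∂ρ)
    (hm₁ : ρ {t | m < (Ψ t).rank} = 0)
    (e : Fin m → EuclideanSpace ℂ (Fin n)) (he : Orthonormal ℂ e) :
    (∀ (k : ℕ) (hk : k ≤ m), 1 ≤ k → ∀ i : ℕ, 1 ≤ i → i ≤ k →
        {t : ℝ | i ≤ (Matrix.of fun p q : Fin k =>
            ⟪Matrix.toEuclideanLin (Ψ t) (e (Fin.castLE hk q)),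
              e (Fin.castLE hk p)⟫).rank}
          =ᵐ[ρ] {t : ℝ | i ≤ (Ψ t).rank}) ↔
    (∀ (k : ℕ) (hk : k ≤ m), 1 ≤ k →
        {t : ℝ | (Matrix.of fun p q : Fin k =>
            ⟪Matrix.toEuclideanLin (Ψ t) (e (Fin.castLE hk q)),
              e (Fin.castLE hk p)⟫).det ≠ 0}
          =ᵐ[ρ] {t : ℝ | k ≤ (Ψ t).rank}) := by
  constructor
  · intro H k hk hk1
    have hset : {t : ℝ | (Matrix.of fun p q : Fin k =>
            ⟪Matrix.toEuclideanLin (Ψ t) (e (Fin.castLE hk q)),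
              e (Fin.castLE hk p)⟫).det ≠ 0}
        = {t : ℝ | k ≤ (Matrix.of fun p q : Fin k =>
            ⟪Matrix.toEuclideanLin (Ψ t) (e (Fin.castLE hk q)),
              e (Fin.castLE hk p)⟫).rank} := by
      ext t
      exact det_ne_zero_iff_le_rank _
    rw [hset]
    exact H k hk hk1 k hk1 le_rfl
  · intro H k hk hk1 i hi1 hik
    have him : i ≤ m := hik.trans hk
    have hI := H i him hi1
    rw [Filter.eventuallyEq_set] at hI ⊢
    filter_upwards [hI] with t ht
    constructor
    · intro h
      exact h.trans (rank_compress_le (Ψ t) _)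
    · intro h
      have hdet : (Matrix.of fun p q : Fin i =>
          ⟪Matrix.toEuclideanLin (Ψ t) (e (Fin.castLE him q)),
            e (Fin.castLE him p)⟫).det ≠ 0 := ht.mpr h
      have h1 : i ≤ (Matrix.of fun p q : Fin i =>
          ⟪Matrix.toEuclideanLin (Ψ t) (e (Fin.castLE him q)),
            e (Fin.castLE him p)⟫).rank := (det_ne_zero_iff_le_rank _).mp hdet
      calc i ≤ _ := h1
        _ ≤ _ := by
            rw [compress_nest hik hk him (Ψ t) e]
            exact rank_castLE_submatrix_le hik _
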